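/- Let Z be a standard normal random variable and c ≠ 0 a real constant. Then (Z + c)² stochastically dominates Z²: for every t > 0, P((Z+c)² > t) > P(Z² > t). -/

import Mathlib

open MeasureTheory ProbabilityTheory Real Set

noncomputable def phiN : ℝ → ℝ := gaussianPDFReal 0 1

lemma phiN_cont : Continuous phiN := by
  unfold phiN gaussianPDFReal
  fun_prop

lemma phiN_nonneg (x : ℝ) : 0 ≤ phiN x := gaussianPDFReal_nonneg 0 1 x

lemma phiN_integrable : Integrable phiN := integrable_gaussianPDFReal 0 1

lemma phiN_total : ∫ x, phiN x = 1 := integral_gaussianPDFReal_eq_one 0 one_ne_zero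

lemma phiN_even (x : ℝ) : phiN (-x) = phiN x := by
  unfold phiN gaussianPDFReal
  ring_nf

lemma phiN_lt {a b : ℝ} (h : |a| < |b|) : phiN b < phiN a := by
  simp only [phiN, gaussianPDFReal, NNReal.coe_one]
  refine mul_lt_mul_of_pos_left (Real.exp_lt_exp.mpr ?_) (by positivity)
  have h2 : a ^ 2 < b ^ 2 := by
    rw [← sq_abs a, ← sq_abs b]
    exact pow_lt_pow_left₀ h (abs_nonneg a) two_ne_zero
  nlinarith

noncomputable def FN : ℝ → ℝ := fun a => ∫ x in (0:ℝ)..a, phiN x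

lemma FN_hasDerivAt (a : ℝ) : HasDerivAt FN (phiN a) a :=
  intervalIntegral.integral_hasDerivAt_right phiN_integrable.intervalIntegrable
    (phiN_cont.stronglyMeasurable.stronglyMeasurableAtFilter)
    phiN_cont.continuousAt

lemma FN_neg (a : ℝ) : FN (-a) = - FN a := by
  unfold FN
  have h : (∫ x in (0:ℝ)..(-a), phiN x) = ∫ x in (0:ℝ)..(-a), phiN (-x) := by
    simp [phiN_even]
  rw [h, intervalIntegral.integral_comp_neg, neg_zero,
    intervalIntegral.integral_symm]
  simp

lemma key (s : ℝ) (hs : 0 < s) {c : ℝ} (hc : c ≠ 0) :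
    ∫ x in Icc (-s - c) (s - c), phiN x < ∫ x in Icc (-s) s, phiN x := by
  set G : ℝ → ℝ := fun c => FN (s - c) - FN (-s - c) with hGdef
  have hG : ∀ c : ℝ, HasDerivAt G (phiN (-s - c) - phiN (s - c)) c := by
    intro c
    have h1 : HasDerivAt (fun x : ℝ => s - x) (-1) c := (hasDerivAt_id c).const_sub s
    have h2 : HasDerivAt (fun x : ℝ => -s - x) (-1) c := (hasDerivAt_id c).const_sub (-s)
    have := ((FN_hasDerivAt (s - c)).comp c h1).sub ((FN_hasDerivAt (-s - c)).comp c h2)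
    refine this.congr_deriv ?_
    ring
  have hGcont : Continuous G := by
    have : Differentiable ℝ G := fun x => (hG x).differentiableAt
    exact this.continuous
  have hGanti : StrictAntiOn G (Ici 0) := by
    refine strictAntiOn_of_deriv_neg (convex_Ici 0) hGcont.continuousOn ?_
    intro x hx
    rw [interior_Ici] at hx
    rw [(hG x).deriv]
    have hx0 : 0 < x := hx
    have habs : |s - x| < |-s - x| := by
      have h1 : |-s - x| = s + x := by
        rw [abs_of_neg (by linarith : -s - x < 0)]; ring
      rw [h1, abs_lt]
      constructor <;> linarith
    linarith [phiN_lt habs]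
  have hGeven : ∀ c : ℝ, G (-c) = G c := by
    intro c
    simp only [hGdef]
    have h1 : -s - -c = -(s - c) := by ring
    have h2 : -s - c = -(s + c) := by ring
    have h3 : s - -c = s + c := by ring
    rw [h1, h2, h3, FN_neg, FN_neg]
    ring
  have hGlt : G c < G 0 := by
    rcases lt_or_gt_of_ne hc with h | h
    · rw [← hGeven c]
      exact hGanti (mem_Ici.mpr le_rfl) (mem_Ici.mpr (by linarith)) (by linarith)
    · exact hGanti (mem_Ici.mpr le_rfl) (mem_Ici.mpr h.le) h
  have hicc : ∀ d : ℝ, ∫ x in Icc (-s - d) (s - d), phiN x = G d := by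
    intro d
    rw [integral_Icc_eq_integral_Ioc,
      ← intervalIntegral.integral_of_le (by linarith : -s - d ≤ s - d)]
    simp only [hGdef, FN]
    exact (intervalIntegral.integral_interval_sub_left
      phiN_integrable.intervalIntegrable phiN_integrable.intervalIntegrable).symm
  calc ∫ x in Icc (-s - c) (s - c), phiN x = G c := hicc c
    _ < G 0 := hGlt
    _ = ∫ x in Icc (-s) s, phiN x := by
        have := (hicc 0).symm
        simpa using this

/-- If Z is standard normal and c ≠ 0, then (Z+c)² strictly stochastically dominates Z². -/
theorem stmt11 {Ω : Type*} [MeasurableSpace Ω] (μ : Measure Ω) [IsProbabilityMeasure μ]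
    (Z : Ω → ℝ) (hZ : Measurable Z)
    (hZgauss : Measure.map Z μ = gaussianReal 0 1)
    (c : ℝ) (hc : c ≠ 0) :
    ∀ t : ℝ, 0 < t → μ {ω | t < Z ω ^ 2} < μ {ω | t < (Z ω + c) ^ 2} := by
  intro t ht
  set s := Real.sqrt t with hsdef
  have hs : 0 < s := Real.sqrt_pos.mpr ht
  have hts : s ^ 2 = t := Real.sq_sqrt ht.le
  set A : Set ℝ := {x | t < x ^ 2} with hA
  set A' : Set ℝ := {x | t < (x + c) ^ 2} with hA'
  have hAm : MeasurableSet A := measurableSet_lt measurable_const (by measurability)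
  have hA'm : MeasurableSet A' := measurableSet_lt measurable_const (by measurability)
  have habs : ∀ x : ℝ, x ^ 2 ≤ t ↔ -s ≤ x ∧ x ≤ s := by
    intro x
    constructor
    · intro h
      have : |x| ≤ s := by
        rw [← Real.sqrt_sq_eq_abs]
        exact Real.sqrt_le_sqrt h
      exact abs_le.mp this
    · intro ⟨h1, h2⟩
      have : |x| ≤ s := abs_le.mpr ⟨h1, h2⟩
      calc x ^ 2 = |x| ^ 2 := (sq_abs x).symm
        _ ≤ s ^ 2 := pow_le_pow_left₀ (abs_nonneg x) this 2
        _ = t := hts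
  have hAc : Aᶜ = Icc (-s) s := by
    ext x
    simp only [hA, mem_compl_iff, mem_setOf_eq, not_lt, mem_Icc]
    exact habs x
  have hA'c : A'ᶜ = Icc (-s - c) (s - c) := by
    ext x
    simp only [hA', mem_compl_iff, mem_setOf_eq, not_lt, mem_Icc]
    rw [habs (x + c)]
    constructor <;> intro ⟨h1, h2⟩ <;> constructor <;> linarith
  have hmap : ∀ (B : Set ℝ), MeasurableSet B →
      gaussianReal 0 1 B = ENNReal.ofReal (1 - ∫ x in Bᶜ, phiN x) := by
    intro B hB
    rw [gaussianReal_apply_eq_integral 0 one_ne_zero B]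
    congr 1
    have h0 : ∫ x in B, gaussianPDFReal 0 1 x = ∫ x in B, phiN x := rfl
    have := integral_add_compl hB phiN_integrable
    rw [phiN_total] at this
    rw [h0]
    linarith
  have hμA : μ {ω | t < Z ω ^ 2} = gaussianReal 0 1 A := by
    rw [← hZgauss, Measure.map_apply hZ hAm]
    rfl
  have hμA' : μ {ω | t < (Z ω + c) ^ 2} = gaussianReal 0 1 A' := by
    rw [← hZgauss, Measure.map_apply hZ hA'm]
    rfl
  rw [hμA, hμA', hmap A hAm, hmap A' hA'm, hAc, hA'c]
  have hkey := key s hs hc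
  have hle : ∫ x in Icc (-s) s, phiN x ≤ 1 := by
    rw [← phiN_total]
    exact setIntegral_le_integral phiN_integrable (Filter.Eventually.of_forall phiN_nonneg)
  rw [ENNReal.ofReal_lt_ofReal_iff_of_nonneg (by linarith)]
  linarith
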